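/- For any field K and n ≥ 17 (also for n ∈ {9, 12, 14, 15}), there exists a quadratic K-algebra with n generators and n(n−1)/2 quadratic relations whose fourth graded component vanishes: h_4(K, n, n(n−1)/2) = 0. -/

import Mathlib

open TensorProduct

namespace GS

variable (K : Type*) [Field K] (V : Type*) [AddCommGroup V] [Module K V]

/-- The tensor product of two subspaces, as a subspace of the tensor product. -/
noncomputable def tsub {M N : Type*} [AddCommGroup M] [Module K M] [AddCommGroup N] [Module K N]
    (A : Submodule K M) (B : Submodule K N) : Submodule K (M ⊗[K] N) :=
  LinearMap.range (TensorProduct.map A.subtype B.subtype)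

/-- `V ≃ V^{⊗1}`. -/
noncomputable def pow1 : V ≃ₗ[K] ⨂[K]^1 V :=
  (PiTensorProduct.subsingletonEquiv (s := fun _ => V) (0 : Fin 1)).symm

/-- `V ⊗ V ≃ V^{⊗2}`. -/
noncomputable def pow2 : (V ⊗[K] V) ≃ₗ[K] ⨂[K]^2 V :=
  (TensorProduct.congr (pow1 K V) (pow1 K V)).trans
    ((TensorPower.mulEquiv (n := 1) (m := 1)).trans (TensorPower.cast K V (by norm_num)))

/-- The subspace `V^{⊗a} ⊗ L ⊗ V^{⊗b}` of `V^{⊗(a+(2+b))}`. -/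
noncomputable def segAux (a b : ℕ) (L : Submodule K (V ⊗[K] V)) :
    Submodule K (⨂[K]^(a + (2 + b)) V) :=
  Submodule.map (TensorPower.mulEquiv (n := a) (m := 2 + b)).toLinearMap
    (tsub K (⊤ : Submodule K (⨂[K]^a V))
      (Submodule.map (TensorPower.mulEquiv (n := 2) (m := b)).toLinearMap
        (tsub K (L.map (pow2 K V).toLinearMap) (⊤ : Submodule K (⨂[K]^b V)))))

/-- For `j : Fin (q-1)`, the subspace `V^{⊗j} ⊗ L ⊗ V^{⊗(q-2-j)}` of `V^{⊗q}`
(the `(j+1)`-st shift of `L`). -/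
noncomputable def shiftSub (q : ℕ) (L : Submodule K (V ⊗[K] V)) (j : Fin (q - 1)) :
    Submodule K (⨂[K]^q V) :=
  Submodule.map (TensorPower.cast K V (by have := j.2; omega : (j : ℕ) + (2 + (q - 2 - j)) = q)).toLinearMap
    (segAux K V j (q - 2 - j) L)

/-- `E_q(L,V) = ⋂_{j=1}^{q-1} V^{⊗(j-1)} ⊗ L ⊗ V^{⊗(q-1-j)} ⊆ V^{⊗q}`. -/
noncomputable def Eint (q : ℕ) (L : Submodule K (V ⊗[K] V)) : Submodule K (⨂[K]^q V) :=
  ⨅ j : Fin (q - 1), shiftSub K V q L j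

/-- The degree-`q` component of the two-sided ideal generated by the subspace
`M ⊆ V ⊗ V` of quadratic relations: the sum of all shifts `V^{⊗(j-1)} ⊗ M ⊗ V^{⊗(q-1-j)}`. -/
noncomputable def idealComp (q : ℕ) (M : Submodule K (V ⊗[K] V)) : Submodule K (⨂[K]^q V) :=
  ⨆ j : Fin (q - 1), shiftSub K V q M j

/-- The dimension of the degree-`q` component of the quadratic algebra with space of
relations `M ⊆ V ⊗ V` (the quotient of `V^{⊗q}` by the degree-`q` component of the ideal). -/
noncomputable def quadDim (q : ℕ) (M : Submodule K (V ⊗[K] V)) : ℕ :=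
  Module.finrank K ((⨂[K]^q V) ⧸ idealComp K V q M)

/-- `h_q(K,n,d)`: the minimal dimension of the `q`-th graded component over all quadratic
`K`-algebras with `n` generators and `d` (linearly independent) quadratic relations. -/
noncomputable def hq (n d q : ℕ) : ℕ :=
  sInf { h | ∃ M : Submodule K ((Fin n → K) ⊗[K] (Fin n → K)),
      Module.finrank K M = d ∧ quadDim K (Fin n → K) q M = h }

end GS

namespace GSAux
open PiTensorProduct (tprod)

variable {K : Type*} [Field K] {V : Type*} [AddCommGroup V] [Module K V]

lemma tmul_mem_tsub {M N : Type*} [AddCommGroup M] [Module K M] [AddCommGroup N] [Module K N]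
    {A : Submodule K M} {B : Submodule K N} {a : M} {b : N} (ha : a ∈ A) (hb : b ∈ B) :
    a ⊗ₜ[K] b ∈ GS.tsub K A B :=
  ⟨(⟨a, ha⟩ : A) ⊗ₜ[K] (⟨b, hb⟩ : B), by simp [TensorProduct.map_tmul]⟩

lemma tsub_mono {M N : Type*} [AddCommGroup M] [Module K M] [AddCommGroup N] [Module K N]
    {A A' : Submodule K M} {B B' : Submodule K N} (hA : A ≤ A') (hB : B ≤ B') :
    GS.tsub K A B ≤ GS.tsub K A' B' := by
  rintro x ⟨y, rfl⟩
  induction y with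
  | zero => exact (GS.tsub K A' B').zero_mem
  | tmul a b => exact tmul_mem_tsub (hA a.2) (hB b.2)
  | add y z hy hz => rw [map_add]; exact (GS.tsub K A' B').add_mem hy hz

lemma idealComp_mono {M M' : Submodule K (V ⊗[K] V)} (h : M ≤ M') (q : ℕ) :
    GS.idealComp K V q M ≤ GS.idealComp K V q M' := by
  apply iSup_mono
  intro j
  apply Submodule.map_mono
  apply Submodule.map_mono
  apply tsub_mono le_rfl
  apply Submodule.map_mono
  exact tsub_mono (Submodule.map_mono h) le_rfl

lemma mulEquiv_tprod {nn mm : ℕ} (a : Fin nn → V) (b : Fin mm → V) :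
    TensorPower.mulEquiv (R := K) (tprod K a ⊗ₜ tprod K b) = tprod K (Fin.append a b) := by
  rw [← TensorPower.gMul_def, TensorPower.tprod_mul_tprod]

lemma pow1_apply (x : V) : GS.pow1 K V x = tprod K (fun _ : Fin 1 => x) := by
  apply (PiTensorProduct.subsingletonEquiv (0 : Fin 1)).injective
  simp [GS.pow1, PiTensorProduct.subsingletonEquiv_apply_tprod]

lemma pow2_tmul (x y : V) : GS.pow2 K V (x ⊗ₜ[K] y) = tprod K ![x, y] := by
  simp only [GS.pow2, LinearEquiv.trans_apply, TensorProduct.congr_tmul, pow1_apply,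
    mulEquiv_tprod, TensorPower.cast_tprod]
  congr 1
  funext k
  fin_cases k <;> simp [Fin.append, Fin.addCases, Fin.cast] <;> rfl

/-- The three insertion maps `m ↦ (stuff) ∈ ⨂^4 V`. -/
noncomputable def theta0 (u w : V) (m : V ⊗[K] V) : ⨂[K]^4 V :=
  TensorPower.cast K V (by omega : 0 + (2 + 2) = 4)
    (TensorPower.mulEquiv
      ((tprod K (Fin.elim0 : Fin 0 → V)) ⊗ₜ[K]
        (TensorPower.mulEquiv (GS.pow2 K V m ⊗ₜ[K] (tprod K ![u, w])))))

noncomputable def theta1 (u w : V) (m : V ⊗[K] V) : ⨂[K]^4 V :=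
  TensorPower.cast K V (by omega : 1 + (2 + 1) = 4)
    (TensorPower.mulEquiv
      ((tprod K (fun _ : Fin 1 => u)) ⊗ₜ[K]
        (TensorPower.mulEquiv (GS.pow2 K V m ⊗ₜ[K] (tprod K (fun _ : Fin 1 => w))))))

noncomputable def theta2 (u w : V) (m : V ⊗[K] V) : ⨂[K]^4 V :=
  TensorPower.cast K V (by omega : 2 + (2 + 0) = 4)
    (TensorPower.mulEquiv
      ((tprod K ![u, w]) ⊗ₜ[K]
        (TensorPower.mulEquiv (GS.pow2 K V m ⊗ₜ[K] (tprod K (Fin.elim0 : Fin 0 → V))))))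

lemma theta0_mem (M : Submodule K (V ⊗[K] V)) {m : V ⊗[K] V} (hm : m ∈ M) (u w : V) :
    theta0 u w m ∈ GS.idealComp K V 4 M := by
  refine Submodule.mem_iSup_of_mem (⟨0, by omega⟩ : Fin (4-1)) ?_
  exact Submodule.mem_map_of_mem (Submodule.mem_map_of_mem (tmul_mem_tsub trivial
    (Submodule.mem_map_of_mem (tmul_mem_tsub (Submodule.mem_map_of_mem hm) trivial))))

lemma theta1_mem (M : Submodule K (V ⊗[K] V)) {m : V ⊗[K] V} (hm : m ∈ M) (u w : V) :
    theta1 u w m ∈ GS.idealComp K V 4 M := by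
  refine Submodule.mem_iSup_of_mem (⟨1, by omega⟩ : Fin (4-1)) ?_
  exact Submodule.mem_map_of_mem (Submodule.mem_map_of_mem (tmul_mem_tsub trivial
    (Submodule.mem_map_of_mem (tmul_mem_tsub (Submodule.mem_map_of_mem hm) trivial))))

lemma theta2_mem (M : Submodule K (V ⊗[K] V)) {m : V ⊗[K] V} (hm : m ∈ M) (u w : V) :
    theta2 u w m ∈ GS.idealComp K V 4 M := by
  refine Submodule.mem_iSup_of_mem (⟨2, by omega⟩ : Fin (4-1)) ?_
  exact Submodule.mem_map_of_mem (Submodule.mem_map_of_mem (tmul_mem_tsub trivial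
    (Submodule.mem_map_of_mem (tmul_mem_tsub (Submodule.mem_map_of_mem hm) trivial))))

lemma theta0_tmul (u w x y : V) : theta0 u w (x ⊗ₜ[K] y) = tprod K ![x, y, u, w] := by
  rw [theta0, pow2_tmul, mulEquiv_tprod, mulEquiv_tprod, TensorPower.cast_tprod]
  congr 1; funext k; fin_cases k <;> simp [Fin.append, Fin.addCases, Fin.cast] <;> rfl

lemma theta1_tmul (u w x y : V) : theta1 u w (x ⊗ₜ[K] y) = tprod K ![u, x, y, w] := by
  rw [theta1, pow2_tmul, mulEquiv_tprod, mulEquiv_tprod, TensorPower.cast_tprod]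
  congr 1; funext k; fin_cases k <;> simp [Fin.append, Fin.addCases, Fin.cast] <;> rfl

lemma theta2_tmul (u w x y : V) : theta2 u w (x ⊗ₜ[K] y) = tprod K ![u, w, x, y] := by
  rw [theta2, pow2_tmul, mulEquiv_tprod, mulEquiv_tprod, TensorPower.cast_tprod]
  congr 1; funext k; fin_cases k <;> simp [Fin.append, Fin.addCases, Fin.cast] <;> rfl

lemma theta0_sub (u w : V) (p q : V ⊗[K] V) :
    theta0 u w (p - q) = theta0 u w p - theta0 u w q := by
  simp only [theta0, map_sub, sub_tmul, tmul_sub]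
lemma theta1_sub (u w : V) (p q : V ⊗[K] V) :
    theta1 u w (p - q) = theta1 u w p - theta1 u w q := by
  simp only [theta1, map_sub, sub_tmul, tmul_sub]
lemma theta2_sub (u w : V) (p q : V ⊗[K] V) :
    theta2 u w (p - q) = theta2 u w p - theta2 u w q := by
  simp only [theta2, map_sub, sub_tmul, tmul_sub]

/-- Pure membership moves. -/
lemma pure0 {M : Submodule K (V ⊗[K] V)} {x y : V} (hm : x ⊗ₜ[K] y ∈ M) (u w : V) :
    tprod K ![x, y, u, w] ∈ GS.idealComp K V 4 M := by
  rw [← theta0_tmul]; exact theta0_mem M hm u w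
lemma pure1 {M : Submodule K (V ⊗[K] V)} {x y : V} (hm : x ⊗ₜ[K] y ∈ M) (u w : V) :
    tprod K ![u, x, y, w] ∈ GS.idealComp K V 4 M := by
  rw [← theta1_tmul]; exact theta1_mem M hm u w
lemma pure2 {M : Submodule K (V ⊗[K] V)} {x y : V} (hm : x ⊗ₜ[K] y ∈ M) (u w : V) :
    tprod K ![u, w, x, y] ∈ GS.idealComp K V 4 M := by
  rw [← theta2_tmul]; exact theta2_mem M hm u w

/-- Difference moves. -/
lemma diff0 {M : Submodule K (V ⊗[K] V)} {x y z t : V}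
    (hm : x ⊗ₜ[K] y - z ⊗ₜ[K] t ∈ M) (u w : V) :
    tprod K ![x, y, u, w] - tprod K ![z, t, u, w] ∈ GS.idealComp K V 4 M := by
  rw [← theta0_tmul, ← theta0_tmul (K := K) u w z t, ← theta0_sub]
  exact theta0_mem M hm u w
lemma diff1 {M : Submodule K (V ⊗[K] V)} {x y z t : V}
    (hm : x ⊗ₜ[K] y - z ⊗ₜ[K] t ∈ M) (u w : V) :
    tprod K ![u, x, y, w] - tprod K ![u, z, t, w] ∈ GS.idealComp K V 4 M := by
  rw [← theta1_tmul, ← theta1_tmul (K := K) u w z t, ← theta1_sub]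
  exact theta1_mem M hm u w
lemma diff2 {M : Submodule K (V ⊗[K] V)} {x y z t : V}
    (hm : x ⊗ₜ[K] y - z ⊗ₜ[K] t ∈ M) (u w : V) :
    tprod K ![u, w, x, y] - tprod K ![u, w, z, t] ∈ GS.idealComp K V 4 M := by
  rw [← theta2_tmul, ← theta2_tmul (K := K) u w z t, ← theta2_sub]
  exact theta2_mem M hm u w

lemma mem_of_diff' {N : Submodule K V} {A B : V} (h1 : B - A ∈ N) (h2 : B ∈ N) : A ∈ N := by
  have := N.sub_mem h2 h1
  rwa [sub_sub_cancel] at this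

/-- Transfer along a move. -/
lemma mem_of_diff {N : Submodule K V} {A B : V} (h1 : A - B ∈ N) (h2 : B ∈ N) : A ∈ N := by
  have := N.add_mem h1 h2
  rwa [sub_add_cancel] at this

section Abstract
variable {K : Type*} [Field K] {V : Type*} [AddCommGroup V] [Module K V]
variable {a c : ℕ} {E : ℕ → V} {M : Submodule K (V ⊗[K] V)}
lemma mv0XXg (hXX : ∀ x y : ℕ, x < a → y < a → E x ⊗ₜ[K] E y - E (x+a) ⊗ₜ[K] E (y+a) ∈ M) (x y : ℕ) (hx : x < a) (hy : y < a) (u w : V) :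
    tprod K ![E x, E y, u, w] - tprod K ![E (x+a), E (y+a), u, w]
      ∈ GS.idealComp K V 4 M := diff0 (hXX x y hx hy) u w

lemma mv0XYg (hXY : ∀ x y : ℕ, x < a → y < a → E x ⊗ₜ[K] E (y+a) - E (2*a + x % c) ⊗ₜ[K] E (2*a + y % c) ∈ M) (x y : ℕ) (hx : x < a) (hy : y < a) (u w : V) :
    tprod K ![E x, E (y+a), u, w] - tprod K ![E (2*a + x % c), E (2*a + y % c), u, w]
      ∈ GS.idealComp K V 4 M := diff0 (hXY x y hx hy) u w

lemma k0XZg (hXZ : ∀ x z : ℕ, x < a → z < c → E x ⊗ₜ[K] E (2*a + z) ∈ M) (x z : ℕ) (hx : x < a) (hz : z < c) (u w : V) :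
    tprod K ![E x, E (2*a + z), u, w] ∈ GS.idealComp K V 4 M := pure0 (hXZ x z hx hz) u w

lemma k0YZg (hYZ : ∀ y z : ℕ, y < a → z < c → E (y+a) ⊗ₜ[K] E (2*a + z) ∈ M) (x z : ℕ) (hx : x < a) (hz : z < c) (u w : V) :
    tprod K ![E (x+a), E (2*a + z), u, w] ∈ GS.idealComp K V 4 M := pure0 (hYZ x z hx hz) u w

lemma mv1XXg (hXX : ∀ x y : ℕ, x < a → y < a → E x ⊗ₜ[K] E y - E (x+a) ⊗ₜ[K] E (y+a) ∈ M) (x y : ℕ) (hx : x < a) (hy : y < a) (u w : V) :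
    tprod K ![u, E x, E y, w] - tprod K ![u, E (x+a), E (y+a), w]
      ∈ GS.idealComp K V 4 M := diff1 (hXX x y hx hy) u w

lemma mv1XYg (hXY : ∀ x y : ℕ, x < a → y < a → E x ⊗ₜ[K] E (y+a) - E (2*a + x % c) ⊗ₜ[K] E (2*a + y % c) ∈ M) (x y : ℕ) (hx : x < a) (hy : y < a) (u w : V) :
    tprod K ![u, E x, E (y+a), w] - tprod K ![u, E (2*a + x % c), E (2*a + y % c), w]
      ∈ GS.idealComp K V 4 M := diff1 (hXY x y hx hy) u w

lemma k1XZg (hXZ : ∀ x z : ℕ, x < a → z < c → E x ⊗ₜ[K] E (2*a + z) ∈ M) (x z : ℕ) (hx : x < a) (hz : z < c) (u w : V) :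
    tprod K ![u, E x, E (2*a + z), w] ∈ GS.idealComp K V 4 M := pure1 (hXZ x z hx hz) u w

lemma k1YZg (hYZ : ∀ y z : ℕ, y < a → z < c → E (y+a) ⊗ₜ[K] E (2*a + z) ∈ M) (x z : ℕ) (hx : x < a) (hz : z < c) (u w : V) :
    tprod K ![u, E (x+a), E (2*a + z), w] ∈ GS.idealComp K V 4 M := pure1 (hYZ x z hx hz) u w

lemma mv2XXg (hXX : ∀ x y : ℕ, x < a → y < a → E x ⊗ₜ[K] E y - E (x+a) ⊗ₜ[K] E (y+a) ∈ M) (x y : ℕ) (hx : x < a) (hy : y < a) (u w : V) :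
    tprod K ![u, w, E x, E y] - tprod K ![u, w, E (x+a), E (y+a)]
      ∈ GS.idealComp K V 4 M := diff2 (hXX x y hx hy) u w

lemma mv2XYg (hXY : ∀ x y : ℕ, x < a → y < a → E x ⊗ₜ[K] E (y+a) - E (2*a + x % c) ⊗ₜ[K] E (2*a + y % c) ∈ M) (x y : ℕ) (hx : x < a) (hy : y < a) (u w : V) :
    tprod K ![u, w, E x, E (y+a)] - tprod K ![u, w, E (2*a + x % c), E (2*a + y % c)]
      ∈ GS.idealComp K V 4 M := diff2 (hXY x y hx hy) u w

lemma k2XZg (hXZ : ∀ x z : ℕ, x < a → z < c → E x ⊗ₜ[K] E (2*a + z) ∈ M) (x z : ℕ) (hx : x < a) (hz : z < c) (u w : V) :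
    tprod K ![u, w, E x, E (2*a + z)] ∈ GS.idealComp K V 4 M := pure2 (hXZ x z hx hz) u w

lemma k2YZg (hYZ : ∀ y z : ℕ, y < a → z < c → E (y+a) ⊗ₜ[K] E (2*a + z) ∈ M) (x z : ℕ) (hx : x < a) (hz : z < c) (u w : V) :
    tprod K ![u, w, E (x+a), E (2*a + z)] ∈ GS.idealComp K V 4 M := pure2 (hYZ x z hx hz) u w

end Abstract

section Master
variable {K : Type*} [Field K] {V : Type*} [AddCommGroup V] [Module K V]
variable {a c n : ℕ} {E : ℕ → V} {M : Submodule K (V ⊗[K] V)}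

local notation "NN" => GS.idealComp K V 4 M

lemma classify {a c n : ℕ} (hn : 2*a + c = n) {p : ℕ} (hp : p < n) :
    (∃ x, x < a ∧ p = x) ∨ (∃ x, x < a ∧ p = x + a) ∨ (∃ x, x < c ∧ p = 2*a + x) := by
  rcases Nat.lt_or_ge p a with h | h
  · exact Or.inl ⟨p, h, rfl⟩
  rcases Nat.lt_or_ge p (2*a) with h2 | h2
  · exact Or.inr (Or.inl ⟨p - a, by omega, by omega⟩)
  · exact Or.inr (Or.inr ⟨p - 2*a, by omega, by omega⟩)

set_option maxHeartbeats 3200000 in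
lemma master (hn : 2*a + c = n) (hc : 0 < c) (hca : c ≤ a)
    (hXX : ∀ x y : ℕ, x < a → y < a → E x ⊗ₜ[K] E y - E (x+a) ⊗ₜ[K] E (y+a) ∈ M)
    (hXY : ∀ x y : ℕ, x < a → y < a →
      E x ⊗ₜ[K] E (y+a) - E (2*a + x % c) ⊗ₜ[K] E (2*a + y % c) ∈ M)
    (hXZ : ∀ x z : ℕ, x < a → z < c → E x ⊗ₜ[K] E (2*a + z) ∈ M)
    (hYZ : ∀ y z : ℕ, y < a → z < c → E (y+a) ⊗ₜ[K] E (2*a + z) ∈ M)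
    {p0 p1 p2 p3 : ℕ} (hp0 : p0 < n) (hp1 : p1 < n) (hp2 : p2 < n) (hp3 : p3 < n) :
    tprod K ![E p0, E p1, E p2, E p3] ∈ NN := by
  rcases classify hn hp0 with ⟨x0, h0, rfl⟩ | ⟨x0, h0, rfl⟩ | ⟨x0, h0, rfl⟩
  · rcases classify hn hp1 with ⟨x1, h1, rfl⟩ | ⟨x1, h1, rfl⟩ | ⟨x1, h1, rfl⟩
    · rcases classify hn hp2 with ⟨x2, h2, rfl⟩ | ⟨x2, h2, rfl⟩ | ⟨x2, h2, rfl⟩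
      · rcases classify hn hp3 with ⟨x3, h3, rfl⟩ | ⟨x3, h3, rfl⟩ | ⟨x3, h3, rfl⟩
        · have t2 : tprod K ![(E (p0)), (E (2*a + (p1 % c))), (E (2*a + (p2 % c))), (E (p3 + a))] ∈ NN := k0XZg hXZ (p0) (p1 % c) h0 (Nat.mod_lt _ hc) (E (2*a + (p2 % c))) (E (p3 + a))
          have t1 : tprod K ![(E (p0)), (E (p1)), (E (p2 + a)), (E (p3 + a))] ∈ NN := mem_of_diff (mv1XYg hXY (p1) (p2) h1 h2 (E (p0)) (E (p3 + a))) t2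
          have t0 : tprod K ![(E (p0)), (E (p1)), (E (p2)), (E (p3))] ∈ NN := mem_of_diff (mv2XXg hXX (p2) (p3) h2 h3 (E (p0)) (E (p1))) t1
          exact t0
        · have t1 : tprod K ![(E (p0)), (E (p1)), (E (2*a + (p2 % c))), (E (2*a + (x3 % c)))] ∈ NN := k1XZg hXZ (p1) (p2 % c) h1 (Nat.mod_lt _ hc) (E (p0)) (E (2*a + (x3 % c)))
          have t0 : tprod K ![(E (p0)), (E (p1)), (E (p2)), (E (x3 + a))] ∈ NN := mem_of_diff (mv2XYg hXY (p2) (x3) h2 h3 (E (p0)) (E (p1))) t1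
          exact t0
        · have t0 : tprod K ![(E (p0)), (E (p1)), (E (p2)), (E (2*a + (x3)))] ∈ NN := k2XZg hXZ (p2) (x3) h2 h3 (E (p0)) (E (p1))
          exact t0
      · rcases classify hn hp3 with ⟨x3, h3, rfl⟩ | ⟨x3, h3, rfl⟩ | ⟨x3, h3, rfl⟩
        · have t1 : tprod K ![(E (p0)), (E (2*a + (p1 % c))), (E (2*a + (x2 % c))), (E (p3))] ∈ NN := k0XZg hXZ (p0) (p1 % c) h0 (Nat.mod_lt _ hc) (E (2*a + (x2 % c))) (E (p3))
          have t0 : tprod K ![(E (p0)), (E (p1)), (E (x2 + a)), (E (p3))] ∈ NN := mem_of_diff (mv1XYg hXY (p1) (x2) h1 h2 (E (p0)) (E (p3))) t1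
          exact t0
        · have t1 : tprod K ![(E (p0)), (E (2*a + (p1 % c))), (E (2*a + (x2 % c))), (E (x3 + a))] ∈ NN := k0XZg hXZ (p0) (p1 % c) h0 (Nat.mod_lt _ hc) (E (2*a + (x2 % c))) (E (x3 + a))
          have t0 : tprod K ![(E (p0)), (E (p1)), (E (x2 + a)), (E (x3 + a))] ∈ NN := mem_of_diff (mv1XYg hXY (p1) (x2) h1 h2 (E (p0)) (E (x3 + a))) t1
          exact t0
        · have t0 : tprod K ![(E (p0)), (E (p1)), (E (x2 + a)), (E (2*a + (x3)))] ∈ NN := k2YZg hYZ (x2) (x3) h2 h3 (E (p0)) (E (p1))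
          exact t0
      · rcases classify hn hp3 with ⟨x3, h3, rfl⟩ | ⟨x3, h3, rfl⟩ | ⟨x3, h3, rfl⟩
        · have t0 : tprod K ![(E (p0)), (E (p1)), (E (2*a + (x2))), (E (p3))] ∈ NN := k1XZg hXZ (p1) (x2) h1 h2 (E (p0)) (E (p3))
          exact t0
        · have t0 : tprod K ![(E (p0)), (E (p1)), (E (2*a + (x2))), (E (x3 + a))] ∈ NN := k1XZg hXZ (p1) (x2) h1 h2 (E (p0)) (E (x3 + a))
          exact t0
        · have t0 : tprod K ![(E (p0)), (E (p1)), (E (2*a + (x2))), (E (2*a + (x3)))] ∈ NN := k1XZg hXZ (p1) (x2) h1 h2 (E (p0)) (E (2*a + (x3)))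
          exact t0
    · rcases classify hn hp2 with ⟨x2, h2, rfl⟩ | ⟨x2, h2, rfl⟩ | ⟨x2, h2, rfl⟩
      · rcases classify hn hp3 with ⟨x3, h3, rfl⟩ | ⟨x3, h3, rfl⟩ | ⟨x3, h3, rfl⟩
        · have t3 : tprod K ![(E (p0)), (E (x1)), (E (2*a + (p2 % c))), (E (2*a + (p3 % c)))] ∈ NN := k1XZg hXZ (x1) (p2 % c) h1 (Nat.mod_lt _ hc) (E (p0)) (E (2*a + (p3 % c)))
          have t2 : tprod K ![(E (p0)), (E (x1)), (E (p2)), (E (p3 + a))] ∈ NN := mem_of_diff (mv2XYg hXY (p2) (p3) h2 h3 (E (p0)) (E (x1))) t3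
          have t1 : tprod K ![(E (p0)), (E (x1 + a)), (E (p2 + a)), (E (p3 + a))] ∈ NN := mem_of_diff' (mv1XXg hXX (x1) (p2) h1 h2 (E (p0)) (E (p3 + a))) t2
          have t0 : tprod K ![(E (p0)), (E (x1 + a)), (E (p2)), (E (p3))] ∈ NN := mem_of_diff (mv2XXg hXX (p2) (p3) h2 h3 (E (p0)) (E (x1 + a))) t1
          exact t0
        · have t1 : tprod K ![(E (p0)), (E (x1 + a)), (E (2*a + (p2 % c))), (E (2*a + (x3 % c)))] ∈ NN := k1YZg hYZ (x1) (p2 % c) h1 (Nat.mod_lt _ hc) (E (p0)) (E (2*a + (x3 % c)))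
          have t0 : tprod K ![(E (p0)), (E (x1 + a)), (E (p2)), (E (x3 + a))] ∈ NN := mem_of_diff (mv2XYg hXY (p2) (x3) h2 h3 (E (p0)) (E (x1 + a))) t1
          exact t0
        · have t0 : tprod K ![(E (p0)), (E (x1 + a)), (E (p2)), (E (2*a + (x3)))] ∈ NN := k2XZg hXZ (p2) (x3) h2 h3 (E (p0)) (E (x1 + a))
          exact t0
      · rcases classify hn hp3 with ⟨x3, h3, rfl⟩ | ⟨x3, h3, rfl⟩ | ⟨x3, h3, rfl⟩
        · have t3 : tprod K ![(E (p0)), (E (2*a + (x1 % c))), (E (2*a + (x2 % c))), (E (p3 + a))] ∈ NN := k0XZg hXZ (p0) (x1 % c) h0 (Nat.mod_lt _ hc) (E (2*a + (x2 % c))) (E (p3 + a))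
          have t2 : tprod K ![(E (p0)), (E (x1)), (E (x2 + a)), (E (p3 + a))] ∈ NN := mem_of_diff (mv1XYg hXY (x1) (x2) h1 h2 (E (p0)) (E (p3 + a))) t3
          have t1 : tprod K ![(E (p0)), (E (x1)), (E (x2)), (E (p3))] ∈ NN := mem_of_diff (mv2XXg hXX (x2) (p3) h2 h3 (E (p0)) (E (x1))) t2
          have t0 : tprod K ![(E (p0)), (E (x1 + a)), (E (x2 + a)), (E (p3))] ∈ NN := mem_of_diff' (mv1XXg hXX (x1) (x2) h1 h2 (E (p0)) (E (p3))) t1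
          exact t0
        · have t2 : tprod K ![(E (p0)), (E (x1)), (E (2*a + (x2 % c))), (E (2*a + (x3 % c)))] ∈ NN := k1XZg hXZ (x1) (x2 % c) h1 (Nat.mod_lt _ hc) (E (p0)) (E (2*a + (x3 % c)))
          have t1 : tprod K ![(E (p0)), (E (x1)), (E (x2)), (E (x3 + a))] ∈ NN := mem_of_diff (mv2XYg hXY (x2) (x3) h2 h3 (E (p0)) (E (x1))) t2
          have t0 : tprod K ![(E (p0)), (E (x1 + a)), (E (x2 + a)), (E (x3 + a))] ∈ NN := mem_of_diff' (mv1XXg hXX (x1) (x2) h1 h2 (E (p0)) (E (x3 + a))) t1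
          exact t0
        · have t0 : tprod K ![(E (p0)), (E (x1 + a)), (E (x2 + a)), (E (2*a + (x3)))] ∈ NN := k2YZg hYZ (x2) (x3) h2 h3 (E (p0)) (E (x1 + a))
          exact t0
      · rcases classify hn hp3 with ⟨x3, h3, rfl⟩ | ⟨x3, h3, rfl⟩ | ⟨x3, h3, rfl⟩
        · have t0 : tprod K ![(E (p0)), (E (x1 + a)), (E (2*a + (x2))), (E (p3))] ∈ NN := k1YZg hYZ (x1) (x2) h1 h2 (E (p0)) (E (p3))
          exact t0
        · have t0 : tprod K ![(E (p0)), (E (x1 + a)), (E (2*a + (x2))), (E (x3 + a))] ∈ NN := k1YZg hYZ (x1) (x2) h1 h2 (E (p0)) (E (x3 + a))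
          exact t0
        · have t0 : tprod K ![(E (p0)), (E (x1 + a)), (E (2*a + (x2))), (E (2*a + (x3)))] ∈ NN := k1YZg hYZ (x1) (x2) h1 h2 (E (p0)) (E (2*a + (x3)))
          exact t0
    · rcases classify hn hp2 with ⟨x2, h2, rfl⟩ | ⟨x2, h2, rfl⟩ | ⟨x2, h2, rfl⟩
      · rcases classify hn hp3 with ⟨x3, h3, rfl⟩ | ⟨x3, h3, rfl⟩ | ⟨x3, h3, rfl⟩
        · have t0 : tprod K ![(E (p0)), (E (2*a + (x1))), (E (p2)), (E (p3))] ∈ NN := k0XZg hXZ (p0) (x1) h0 h1 (E (p2)) (E (p3))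
          exact t0
        · have t0 : tprod K ![(E (p0)), (E (2*a + (x1))), (E (p2)), (E (x3 + a))] ∈ NN := k0XZg hXZ (p0) (x1) h0 h1 (E (p2)) (E (x3 + a))
          exact t0
        · have t0 : tprod K ![(E (p0)), (E (2*a + (x1))), (E (p2)), (E (2*a + (x3)))] ∈ NN := k0XZg hXZ (p0) (x1) h0 h1 (E (p2)) (E (2*a + (x3)))
          exact t0
      · rcases classify hn hp3 with ⟨x3, h3, rfl⟩ | ⟨x3, h3, rfl⟩ | ⟨x3, h3, rfl⟩
        · have t0 : tprod K ![(E (p0)), (E (2*a + (x1))), (E (x2 + a)), (E (p3))] ∈ NN := k0XZg hXZ (p0) (x1) h0 h1 (E (x2 + a)) (E (p3))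
          exact t0
        · have t0 : tprod K ![(E (p0)), (E (2*a + (x1))), (E (x2 + a)), (E (x3 + a))] ∈ NN := k0XZg hXZ (p0) (x1) h0 h1 (E (x2 + a)) (E (x3 + a))
          exact t0
        · have t0 : tprod K ![(E (p0)), (E (2*a + (x1))), (E (x2 + a)), (E (2*a + (x3)))] ∈ NN := k0XZg hXZ (p0) (x1) h0 h1 (E (x2 + a)) (E (2*a + (x3)))
          exact t0
      · rcases classify hn hp3 with ⟨x3, h3, rfl⟩ | ⟨x3, h3, rfl⟩ | ⟨x3, h3, rfl⟩
        · have t0 : tprod K ![(E (p0)), (E (2*a + (x1))), (E (2*a + (x2))), (E (p3))] ∈ NN := k0XZg hXZ (p0) (x1) h0 h1 (E (2*a + (x2))) (E (p3))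
          exact t0
        · have t0 : tprod K ![(E (p0)), (E (2*a + (x1))), (E (2*a + (x2))), (E (x3 + a))] ∈ NN := k0XZg hXZ (p0) (x1) h0 h1 (E (2*a + (x2))) (E (x3 + a))
          exact t0
        · have t0 : tprod K ![(E (p0)), (E (2*a + (x1))), (E (2*a + (x2))), (E (2*a + (x3)))] ∈ NN := k0XZg hXZ (p0) (x1) h0 h1 (E (2*a + (x2))) (E (2*a + (x3)))
          exact t0
  · rcases classify hn hp1 with ⟨x1, h1, rfl⟩ | ⟨x1, h1, rfl⟩ | ⟨x1, h1, rfl⟩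
    · rcases classify hn hp2 with ⟨x2, h2, rfl⟩ | ⟨x2, h2, rfl⟩ | ⟨x2, h2, rfl⟩
      · rcases classify hn hp3 with ⟨x3, h3, rfl⟩ | ⟨x3, h3, rfl⟩ | ⟨x3, h3, rfl⟩
        · have t2 : tprod K ![(E (x0 + a)), (E (2*a + (p1 % c))), (E (2*a + (p2 % c))), (E (p3 + a))] ∈ NN := k0YZg hYZ (x0) (p1 % c) h0 (Nat.mod_lt _ hc) (E (2*a + (p2 % c))) (E (p3 + a))
          have t1 : tprod K ![(E (x0 + a)), (E (p1)), (E (p2 + a)), (E (p3 + a))] ∈ NN := mem_of_diff (mv1XYg hXY (p1) (p2) h1 h2 (E (x0 + a)) (E (p3 + a))) t2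
          have t0 : tprod K ![(E (x0 + a)), (E (p1)), (E (p2)), (E (p3))] ∈ NN := mem_of_diff (mv2XXg hXX (p2) (p3) h2 h3 (E (x0 + a)) (E (p1))) t1
          exact t0
        · have t1 : tprod K ![(E (x0 + a)), (E (p1)), (E (2*a + (p2 % c))), (E (2*a + (x3 % c)))] ∈ NN := k1XZg hXZ (p1) (p2 % c) h1 (Nat.mod_lt _ hc) (E (x0 + a)) (E (2*a + (x3 % c)))
          have t0 : tprod K ![(E (x0 + a)), (E (p1)), (E (p2)), (E (x3 + a))] ∈ NN := mem_of_diff (mv2XYg hXY (p2) (x3) h2 h3 (E (x0 + a)) (E (p1))) t1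
          exact t0
        · have t0 : tprod K ![(E (x0 + a)), (E (p1)), (E (p2)), (E (2*a + (x3)))] ∈ NN := k2XZg hXZ (p2) (x3) h2 h3 (E (x0 + a)) (E (p1))
          exact t0
      · rcases classify hn hp3 with ⟨x3, h3, rfl⟩ | ⟨x3, h3, rfl⟩ | ⟨x3, h3, rfl⟩
        · have t1 : tprod K ![(E (x0 + a)), (E (2*a + (p1 % c))), (E (2*a + (x2 % c))), (E (p3))] ∈ NN := k0YZg hYZ (x0) (p1 % c) h0 (Nat.mod_lt _ hc) (E (2*a + (x2 % c))) (E (p3))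
          have t0 : tprod K ![(E (x0 + a)), (E (p1)), (E (x2 + a)), (E (p3))] ∈ NN := mem_of_diff (mv1XYg hXY (p1) (x2) h1 h2 (E (x0 + a)) (E (p3))) t1
          exact t0
        · have t1 : tprod K ![(E (x0 + a)), (E (2*a + (p1 % c))), (E (2*a + (x2 % c))), (E (x3 + a))] ∈ NN := k0YZg hYZ (x0) (p1 % c) h0 (Nat.mod_lt _ hc) (E (2*a + (x2 % c))) (E (x3 + a))
          have t0 : tprod K ![(E (x0 + a)), (E (p1)), (E (x2 + a)), (E (x3 + a))] ∈ NN := mem_of_diff (mv1XYg hXY (p1) (x2) h1 h2 (E (x0 + a)) (E (x3 + a))) t1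
          exact t0
        · have t0 : tprod K ![(E (x0 + a)), (E (p1)), (E (x2 + a)), (E (2*a + (x3)))] ∈ NN := k2YZg hYZ (x2) (x3) h2 h3 (E (x0 + a)) (E (p1))
          exact t0
      · rcases classify hn hp3 with ⟨x3, h3, rfl⟩ | ⟨x3, h3, rfl⟩ | ⟨x3, h3, rfl⟩
        · have t0 : tprod K ![(E (x0 + a)), (E (p1)), (E (2*a + (x2))), (E (p3))] ∈ NN := k1XZg hXZ (p1) (x2) h1 h2 (E (x0 + a)) (E (p3))
          exact t0
        · have t0 : tprod K ![(E (x0 + a)), (E (p1)), (E (2*a + (x2))), (E (x3 + a))] ∈ NN := k1XZg hXZ (p1) (x2) h1 h2 (E (x0 + a)) (E (x3 + a))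
          exact t0
        · have t0 : tprod K ![(E (x0 + a)), (E (p1)), (E (2*a + (x2))), (E (2*a + (x3)))] ∈ NN := k1XZg hXZ (p1) (x2) h1 h2 (E (x0 + a)) (E (2*a + (x3)))
          exact t0
    · rcases classify hn hp2 with ⟨x2, h2, rfl⟩ | ⟨x2, h2, rfl⟩ | ⟨x2, h2, rfl⟩
      · rcases classify hn hp3 with ⟨x3, h3, rfl⟩ | ⟨x3, h3, rfl⟩ | ⟨x3, h3, rfl⟩
        · have t3 : tprod K ![(E (x0)), (E (2*a + (x1 % c))), (E (2*a + (p2 % c))), (E (p3 + a))] ∈ NN := k0XZg hXZ (x0) (x1 % c) h0 (Nat.mod_lt _ hc) (E (2*a + (p2 % c))) (E (p3 + a))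
          have t2 : tprod K ![(E (x0)), (E (x1)), (E (p2 + a)), (E (p3 + a))] ∈ NN := mem_of_diff (mv1XYg hXY (x1) (p2) h1 h2 (E (x0)) (E (p3 + a))) t3
          have t1 : tprod K ![(E (x0)), (E (x1)), (E (p2)), (E (p3))] ∈ NN := mem_of_diff (mv2XXg hXX (p2) (p3) h2 h3 (E (x0)) (E (x1))) t2
          have t0 : tprod K ![(E (x0 + a)), (E (x1 + a)), (E (p2)), (E (p3))] ∈ NN := mem_of_diff' (mv0XXg hXX (x0) (x1) h0 h1 (E (p2)) (E (p3))) t1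
          exact t0
        · have t1 : tprod K ![(E (x0 + a)), (E (x1 + a)), (E (2*a + (p2 % c))), (E (2*a + (x3 % c)))] ∈ NN := k1YZg hYZ (x1) (p2 % c) h1 (Nat.mod_lt _ hc) (E (x0 + a)) (E (2*a + (x3 % c)))
          have t0 : tprod K ![(E (x0 + a)), (E (x1 + a)), (E (p2)), (E (x3 + a))] ∈ NN := mem_of_diff (mv2XYg hXY (p2) (x3) h2 h3 (E (x0 + a)) (E (x1 + a))) t1
          exact t0
        · have t0 : tprod K ![(E (x0 + a)), (E (x1 + a)), (E (p2)), (E (2*a + (x3)))] ∈ NN := k2XZg hXZ (p2) (x3) h2 h3 (E (x0 + a)) (E (x1 + a))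
          exact t0
      · rcases classify hn hp3 with ⟨x3, h3, rfl⟩ | ⟨x3, h3, rfl⟩ | ⟨x3, h3, rfl⟩
        · have t2 : tprod K ![(E (x0)), (E (2*a + (x1 % c))), (E (2*a + (x2 % c))), (E (p3))] ∈ NN := k0XZg hXZ (x0) (x1 % c) h0 (Nat.mod_lt _ hc) (E (2*a + (x2 % c))) (E (p3))
          have t1 : tprod K ![(E (x0)), (E (x1)), (E (x2 + a)), (E (p3))] ∈ NN := mem_of_diff (mv1XYg hXY (x1) (x2) h1 h2 (E (x0)) (E (p3))) t2
          have t0 : tprod K ![(E (x0 + a)), (E (x1 + a)), (E (x2 + a)), (E (p3))] ∈ NN := mem_of_diff' (mv0XXg hXX (x0) (x1) h0 h1 (E (x2 + a)) (E (p3))) t1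
          exact t0
        · have t2 : tprod K ![(E (x0)), (E (2*a + (x1 % c))), (E (2*a + (x2 % c))), (E (x3 + a))] ∈ NN := k0XZg hXZ (x0) (x1 % c) h0 (Nat.mod_lt _ hc) (E (2*a + (x2 % c))) (E (x3 + a))
          have t1 : tprod K ![(E (x0)), (E (x1)), (E (x2 + a)), (E (x3 + a))] ∈ NN := mem_of_diff (mv1XYg hXY (x1) (x2) h1 h2 (E (x0)) (E (x3 + a))) t2
          have t0 : tprod K ![(E (x0 + a)), (E (x1 + a)), (E (x2 + a)), (E (x3 + a))] ∈ NN := mem_of_diff' (mv0XXg hXX (x0) (x1) h0 h1 (E (x2 + a)) (E (x3 + a))) t1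
          exact t0
        · have t0 : tprod K ![(E (x0 + a)), (E (x1 + a)), (E (x2 + a)), (E (2*a + (x3)))] ∈ NN := k2YZg hYZ (x2) (x3) h2 h3 (E (x0 + a)) (E (x1 + a))
          exact t0
      · rcases classify hn hp3 with ⟨x3, h3, rfl⟩ | ⟨x3, h3, rfl⟩ | ⟨x3, h3, rfl⟩
        · have t0 : tprod K ![(E (x0 + a)), (E (x1 + a)), (E (2*a + (x2))), (E (p3))] ∈ NN := k1YZg hYZ (x1) (x2) h1 h2 (E (x0 + a)) (E (p3))
          exact t0
        · have t0 : tprod K ![(E (x0 + a)), (E (x1 + a)), (E (2*a + (x2))), (E (x3 + a))] ∈ NN := k1YZg hYZ (x1) (x2) h1 h2 (E (x0 + a)) (E (x3 + a))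
          exact t0
        · have t0 : tprod K ![(E (x0 + a)), (E (x1 + a)), (E (2*a + (x2))), (E (2*a + (x3)))] ∈ NN := k1YZg hYZ (x1) (x2) h1 h2 (E (x0 + a)) (E (2*a + (x3)))
          exact t0
    · rcases classify hn hp2 with ⟨x2, h2, rfl⟩ | ⟨x2, h2, rfl⟩ | ⟨x2, h2, rfl⟩
      · rcases classify hn hp3 with ⟨x3, h3, rfl⟩ | ⟨x3, h3, rfl⟩ | ⟨x3, h3, rfl⟩
        · have t0 : tprod K ![(E (x0 + a)), (E (2*a + (x1))), (E (p2)), (E (p3))] ∈ NN := k0YZg hYZ (x0) (x1) h0 h1 (E (p2)) (E (p3))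
          exact t0
        · have t0 : tprod K ![(E (x0 + a)), (E (2*a + (x1))), (E (p2)), (E (x3 + a))] ∈ NN := k0YZg hYZ (x0) (x1) h0 h1 (E (p2)) (E (x3 + a))
          exact t0
        · have t0 : tprod K ![(E (x0 + a)), (E (2*a + (x1))), (E (p2)), (E (2*a + (x3)))] ∈ NN := k0YZg hYZ (x0) (x1) h0 h1 (E (p2)) (E (2*a + (x3)))
          exact t0
      · rcases classify hn hp3 with ⟨x3, h3, rfl⟩ | ⟨x3, h3, rfl⟩ | ⟨x3, h3, rfl⟩
        · have t0 : tprod K ![(E (x0 + a)), (E (2*a + (x1))), (E (x2 + a)), (E (p3))] ∈ NN := k0YZg hYZ (x0) (x1) h0 h1 (E (x2 + a)) (E (p3))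
          exact t0
        · have t0 : tprod K ![(E (x0 + a)), (E (2*a + (x1))), (E (x2 + a)), (E (x3 + a))] ∈ NN := k0YZg hYZ (x0) (x1) h0 h1 (E (x2 + a)) (E (x3 + a))
          exact t0
        · have t0 : tprod K ![(E (x0 + a)), (E (2*a + (x1))), (E (x2 + a)), (E (2*a + (x3)))] ∈ NN := k0YZg hYZ (x0) (x1) h0 h1 (E (x2 + a)) (E (2*a + (x3)))
          exact t0
      · rcases classify hn hp3 with ⟨x3, h3, rfl⟩ | ⟨x3, h3, rfl⟩ | ⟨x3, h3, rfl⟩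
        · have t0 : tprod K ![(E (x0 + a)), (E (2*a + (x1))), (E (2*a + (x2))), (E (p3))] ∈ NN := k0YZg hYZ (x0) (x1) h0 h1 (E (2*a + (x2))) (E (p3))
          exact t0
        · have t0 : tprod K ![(E (x0 + a)), (E (2*a + (x1))), (E (2*a + (x2))), (E (x3 + a))] ∈ NN := k0YZg hYZ (x0) (x1) h0 h1 (E (2*a + (x2))) (E (x3 + a))
          exact t0
        · have t0 : tprod K ![(E (x0 + a)), (E (2*a + (x1))), (E (2*a + (x2))), (E (2*a + (x3)))] ∈ NN := k0YZg hYZ (x0) (x1) h0 h1 (E (2*a + (x2))) (E (2*a + (x3)))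
          exact t0
  · rcases classify hn hp1 with ⟨x1, h1, rfl⟩ | ⟨x1, h1, rfl⟩ | ⟨x1, h1, rfl⟩
    · rcases classify hn hp2 with ⟨x2, h2, rfl⟩ | ⟨x2, h2, rfl⟩ | ⟨x2, h2, rfl⟩
      · rcases classify hn hp3 with ⟨x3, h3, rfl⟩ | ⟨x3, h3, rfl⟩ | ⟨x3, h3, rfl⟩
        · have t3 : tprod K ![(E (x0)), (E (p1 % c + a)), (E (2*a + (p2 % c))), (E (p3 + a))] ∈ NN := k1YZg hYZ (p1 % c) (p2 % c) (lt_of_lt_of_le (Nat.mod_lt _ hc) hca) (Nat.mod_lt _ hc) (E (x0)) (E (p3 + a))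
          have hm2 := mv0XYg hXY (x0) (p1 % c) (lt_of_lt_of_le h0 hca) (lt_of_lt_of_le (Nat.mod_lt _ hc) hca) (E (2*a + (p2 % c))) (E (p3 + a))
          rw [Nat.mod_eq_of_lt h0, Nat.mod_eq_of_lt (Nat.mod_lt _ hc)] at hm2
          have t2 : tprod K ![(E (2*a + (x0))), (E (2*a + (p1 % c))), (E (2*a + (p2 % c))), (E (p3 + a))] ∈ NN := mem_of_diff' hm2 t3
          have t1 : tprod K ![(E (2*a + (x0))), (E (p1)), (E (p2 + a)), (E (p3 + a))] ∈ NN := mem_of_diff (mv1XYg hXY (p1) (p2) h1 h2 (E (2*a + (x0))) (E (p3 + a))) t2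
          have t0 : tprod K ![(E (2*a + (x0))), (E (p1)), (E (p2)), (E (p3))] ∈ NN := mem_of_diff (mv2XXg hXX (p2) (p3) h2 h3 (E (2*a + (x0))) (E (p1))) t1
          exact t0
        · have t1 : tprod K ![(E (2*a + (x0))), (E (p1)), (E (2*a + (p2 % c))), (E (2*a + (x3 % c)))] ∈ NN := k1XZg hXZ (p1) (p2 % c) h1 (Nat.mod_lt _ hc) (E (2*a + (x0))) (E (2*a + (x3 % c)))
          have t0 : tprod K ![(E (2*a + (x0))), (E (p1)), (E (p2)), (E (x3 + a))] ∈ NN := mem_of_diff (mv2XYg hXY (p2) (x3) h2 h3 (E (2*a + (x0))) (E (p1))) t1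
          exact t0
        · have t0 : tprod K ![(E (2*a + (x0))), (E (p1)), (E (p2)), (E (2*a + (x3)))] ∈ NN := k2XZg hXZ (p2) (x3) h2 h3 (E (2*a + (x0))) (E (p1))
          exact t0
      · rcases classify hn hp3 with ⟨x3, h3, rfl⟩ | ⟨x3, h3, rfl⟩ | ⟨x3, h3, rfl⟩
        · have t2 : tprod K ![(E (x0)), (E (p1 % c + a)), (E (2*a + (x2 % c))), (E (p3))] ∈ NN := k1YZg hYZ (p1 % c) (x2 % c) (lt_of_lt_of_le (Nat.mod_lt _ hc) hca) (Nat.mod_lt _ hc) (E (x0)) (E (p3))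
          have hm1 := mv0XYg hXY (x0) (p1 % c) (lt_of_lt_of_le h0 hca) (lt_of_lt_of_le (Nat.mod_lt _ hc) hca) (E (2*a + (x2 % c))) (E (p3))
          rw [Nat.mod_eq_of_lt h0, Nat.mod_eq_of_lt (Nat.mod_lt _ hc)] at hm1
          have t1 : tprod K ![(E (2*a + (x0))), (E (2*a + (p1 % c))), (E (2*a + (x2 % c))), (E (p3))] ∈ NN := mem_of_diff' hm1 t2
          have t0 : tprod K ![(E (2*a + (x0))), (E (p1)), (E (x2 + a)), (E (p3))] ∈ NN := mem_of_diff (mv1XYg hXY (p1) (x2) h1 h2 (E (2*a + (x0))) (E (p3))) t1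
          exact t0
        · have t2 : tprod K ![(E (x0)), (E (p1 % c + a)), (E (2*a + (x2 % c))), (E (x3 + a))] ∈ NN := k1YZg hYZ (p1 % c) (x2 % c) (lt_of_lt_of_le (Nat.mod_lt _ hc) hca) (Nat.mod_lt _ hc) (E (x0)) (E (x3 + a))
          have hm1 := mv0XYg hXY (x0) (p1 % c) (lt_of_lt_of_le h0 hca) (lt_of_lt_of_le (Nat.mod_lt _ hc) hca) (E (2*a + (x2 % c))) (E (x3 + a))
          rw [Nat.mod_eq_of_lt h0, Nat.mod_eq_of_lt (Nat.mod_lt _ hc)] at hm1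
          have t1 : tprod K ![(E (2*a + (x0))), (E (2*a + (p1 % c))), (E (2*a + (x2 % c))), (E (x3 + a))] ∈ NN := mem_of_diff' hm1 t2
          have t0 : tprod K ![(E (2*a + (x0))), (E (p1)), (E (x2 + a)), (E (x3 + a))] ∈ NN := mem_of_diff (mv1XYg hXY (p1) (x2) h1 h2 (E (2*a + (x0))) (E (x3 + a))) t1
          exact t0
        · have t0 : tprod K ![(E (2*a + (x0))), (E (p1)), (E (x2 + a)), (E (2*a + (x3)))] ∈ NN := k2YZg hYZ (x2) (x3) h2 h3 (E (2*a + (x0))) (E (p1))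
          exact t0
      · rcases classify hn hp3 with ⟨x3, h3, rfl⟩ | ⟨x3, h3, rfl⟩ | ⟨x3, h3, rfl⟩
        · have t0 : tprod K ![(E (2*a + (x0))), (E (p1)), (E (2*a + (x2))), (E (p3))] ∈ NN := k1XZg hXZ (p1) (x2) h1 h2 (E (2*a + (x0))) (E (p3))
          exact t0
        · have t0 : tprod K ![(E (2*a + (x0))), (E (p1)), (E (2*a + (x2))), (E (x3 + a))] ∈ NN := k1XZg hXZ (p1) (x2) h1 h2 (E (2*a + (x0))) (E (x3 + a))
          exact t0
        · have t0 : tprod K ![(E (2*a + (x0))), (E (p1)), (E (2*a + (x2))), (E (2*a + (x3)))] ∈ NN := k1XZg hXZ (p1) (x2) h1 h2 (E (2*a + (x0))) (E (2*a + (x3)))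
          exact t0
    · rcases classify hn hp2 with ⟨x2, h2, rfl⟩ | ⟨x2, h2, rfl⟩ | ⟨x2, h2, rfl⟩
      · rcases classify hn hp3 with ⟨x3, h3, rfl⟩ | ⟨x3, h3, rfl⟩ | ⟨x3, h3, rfl⟩
        · have t3 : tprod K ![(E (2*a + (x0))), (E (x1)), (E (2*a + (p2 % c))), (E (2*a + (p3 % c)))] ∈ NN := k1XZg hXZ (x1) (p2 % c) h1 (Nat.mod_lt _ hc) (E (2*a + (x0))) (E (2*a + (p3 % c)))
          have t2 : tprod K ![(E (2*a + (x0))), (E (x1)), (E (p2)), (E (p3 + a))] ∈ NN := mem_of_diff (mv2XYg hXY (p2) (p3) h2 h3 (E (2*a + (x0))) (E (x1))) t3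
          have t1 : tprod K ![(E (2*a + (x0))), (E (x1 + a)), (E (p2 + a)), (E (p3 + a))] ∈ NN := mem_of_diff' (mv1XXg hXX (x1) (p2) h1 h2 (E (2*a + (x0))) (E (p3 + a))) t2
          have t0 : tprod K ![(E (2*a + (x0))), (E (x1 + a)), (E (p2)), (E (p3))] ∈ NN := mem_of_diff (mv2XXg hXX (p2) (p3) h2 h3 (E (2*a + (x0))) (E (x1 + a))) t1
          exact t0
        · have t1 : tprod K ![(E (2*a + (x0))), (E (x1 + a)), (E (2*a + (p2 % c))), (E (2*a + (x3 % c)))] ∈ NN := k1YZg hYZ (x1) (p2 % c) h1 (Nat.mod_lt _ hc) (E (2*a + (x0))) (E (2*a + (x3 % c)))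
          have t0 : tprod K ![(E (2*a + (x0))), (E (x1 + a)), (E (p2)), (E (x3 + a))] ∈ NN := mem_of_diff (mv2XYg hXY (p2) (x3) h2 h3 (E (2*a + (x0))) (E (x1 + a))) t1
          exact t0
        · have t0 : tprod K ![(E (2*a + (x0))), (E (x1 + a)), (E (p2)), (E (2*a + (x3)))] ∈ NN := k2XZg hXZ (p2) (x3) h2 h3 (E (2*a + (x0))) (E (x1 + a))
          exact t0
      · rcases classify hn hp3 with ⟨x3, h3, rfl⟩ | ⟨x3, h3, rfl⟩ | ⟨x3, h3, rfl⟩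
        · have t4 : tprod K ![(E (x0)), (E (x1 % c + a)), (E (2*a + (x2 % c))), (E (p3 + a))] ∈ NN := k1YZg hYZ (x1 % c) (x2 % c) (lt_of_lt_of_le (Nat.mod_lt _ hc) hca) (Nat.mod_lt _ hc) (E (x0)) (E (p3 + a))
          have hm3 := mv0XYg hXY (x0) (x1 % c) (lt_of_lt_of_le h0 hca) (lt_of_lt_of_le (Nat.mod_lt _ hc) hca) (E (2*a + (x2 % c))) (E (p3 + a))
          rw [Nat.mod_eq_of_lt h0, Nat.mod_eq_of_lt (Nat.mod_lt _ hc)] at hm3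
          have t3 : tprod K ![(E (2*a + (x0))), (E (2*a + (x1 % c))), (E (2*a + (x2 % c))), (E (p3 + a))] ∈ NN := mem_of_diff' hm3 t4
          have t2 : tprod K ![(E (2*a + (x0))), (E (x1)), (E (x2 + a)), (E (p3 + a))] ∈ NN := mem_of_diff (mv1XYg hXY (x1) (x2) h1 h2 (E (2*a + (x0))) (E (p3 + a))) t3
          have t1 : tprod K ![(E (2*a + (x0))), (E (x1)), (E (x2)), (E (p3))] ∈ NN := mem_of_diff (mv2XXg hXX (x2) (p3) h2 h3 (E (2*a + (x0))) (E (x1))) t2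
          have t0 : tprod K ![(E (2*a + (x0))), (E (x1 + a)), (E (x2 + a)), (E (p3))] ∈ NN := mem_of_diff' (mv1XXg hXX (x1) (x2) h1 h2 (E (2*a + (x0))) (E (p3))) t1
          exact t0
        · have t2 : tprod K ![(E (2*a + (x0))), (E (x1)), (E (2*a + (x2 % c))), (E (2*a + (x3 % c)))] ∈ NN := k1XZg hXZ (x1) (x2 % c) h1 (Nat.mod_lt _ hc) (E (2*a + (x0))) (E (2*a + (x3 % c)))
          have t1 : tprod K ![(E (2*a + (x0))), (E (x1)), (E (x2)), (E (x3 + a))] ∈ NN := mem_of_diff (mv2XYg hXY (x2) (x3) h2 h3 (E (2*a + (x0))) (E (x1))) t2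
          have t0 : tprod K ![(E (2*a + (x0))), (E (x1 + a)), (E (x2 + a)), (E (x3 + a))] ∈ NN := mem_of_diff' (mv1XXg hXX (x1) (x2) h1 h2 (E (2*a + (x0))) (E (x3 + a))) t1
          exact t0
        · have t0 : tprod K ![(E (2*a + (x0))), (E (x1 + a)), (E (x2 + a)), (E (2*a + (x3)))] ∈ NN := k2YZg hYZ (x2) (x3) h2 h3 (E (2*a + (x0))) (E (x1 + a))
          exact t0
      · rcases classify hn hp3 with ⟨x3, h3, rfl⟩ | ⟨x3, h3, rfl⟩ | ⟨x3, h3, rfl⟩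
        · have t0 : tprod K ![(E (2*a + (x0))), (E (x1 + a)), (E (2*a + (x2))), (E (p3))] ∈ NN := k1YZg hYZ (x1) (x2) h1 h2 (E (2*a + (x0))) (E (p3))
          exact t0
        · have t0 : tprod K ![(E (2*a + (x0))), (E (x1 + a)), (E (2*a + (x2))), (E (x3 + a))] ∈ NN := k1YZg hYZ (x1) (x2) h1 h2 (E (2*a + (x0))) (E (x3 + a))
          exact t0
        · have t0 : tprod K ![(E (2*a + (x0))), (E (x1 + a)), (E (2*a + (x2))), (E (2*a + (x3)))] ∈ NN := k1YZg hYZ (x1) (x2) h1 h2 (E (2*a + (x0))) (E (2*a + (x3)))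
          exact t0
    · rcases classify hn hp2 with ⟨x2, h2, rfl⟩ | ⟨x2, h2, rfl⟩ | ⟨x2, h2, rfl⟩
      · rcases classify hn hp3 with ⟨x3, h3, rfl⟩ | ⟨x3, h3, rfl⟩ | ⟨x3, h3, rfl⟩
        · have t4 : tprod K ![(E (x0)), (E (x1)), (E (2*a + (p2 % c))), (E (2*a + (p3 % c)))] ∈ NN := k1XZg hXZ (x1) (p2 % c) (lt_of_lt_of_le h1 hca) (Nat.mod_lt _ hc) (E (x0)) (E (2*a + (p3 % c)))
          have t3 : tprod K ![(E (x0)), (E (x1)), (E (p2)), (E (p3 + a))] ∈ NN := mem_of_diff (mv2XYg hXY (p2) (p3) h2 h3 (E (x0)) (E (x1))) t4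
          have t2 : tprod K ![(E (x0)), (E (x1 + a)), (E (p2 + a)), (E (p3 + a))] ∈ NN := mem_of_diff' (mv1XXg hXX (x1) (p2) (lt_of_lt_of_le h1 hca) h2 (E (x0)) (E (p3 + a))) t3
          have t1 : tprod K ![(E (x0)), (E (x1 + a)), (E (p2)), (E (p3))] ∈ NN := mem_of_diff (mv2XXg hXX (p2) (p3) h2 h3 (E (x0)) (E (x1 + a))) t2
          have hm0 := mv0XYg hXY (x0) (x1) (lt_of_lt_of_le h0 hca) (lt_of_lt_of_le h1 hca) (E (p2)) (E (p3))
          rw [Nat.mod_eq_of_lt h0, Nat.mod_eq_of_lt h1] at hm0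
          have t0 : tprod K ![(E (2*a + (x0))), (E (2*a + (x1))), (E (p2)), (E (p3))] ∈ NN := mem_of_diff' hm0 t1
          exact t0
        · have t2 : tprod K ![(E (x0)), (E (x1 + a)), (E (2*a + (p2 % c))), (E (2*a + (x3 % c)))] ∈ NN := k1YZg hYZ (x1) (p2 % c) (lt_of_lt_of_le h1 hca) (Nat.mod_lt _ hc) (E (x0)) (E (2*a + (x3 % c)))
          have t1 : tprod K ![(E (x0)), (E (x1 + a)), (E (p2)), (E (x3 + a))] ∈ NN := mem_of_diff (mv2XYg hXY (p2) (x3) h2 h3 (E (x0)) (E (x1 + a))) t2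
          have hm0 := mv0XYg hXY (x0) (x1) (lt_of_lt_of_le h0 hca) (lt_of_lt_of_le h1 hca) (E (p2)) (E (x3 + a))
          rw [Nat.mod_eq_of_lt h0, Nat.mod_eq_of_lt h1] at hm0
          have t0 : tprod K ![(E (2*a + (x0))), (E (2*a + (x1))), (E (p2)), (E (x3 + a))] ∈ NN := mem_of_diff' hm0 t1
          exact t0
        · have t0 : tprod K ![(E (2*a + (x0))), (E (2*a + (x1))), (E (p2)), (E (2*a + (x3)))] ∈ NN := k2XZg hXZ (p2) (x3) h2 h3 (E (2*a + (x0))) (E (2*a + (x1)))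
          exact t0
      · rcases classify hn hp3 with ⟨x3, h3, rfl⟩ | ⟨x3, h3, rfl⟩ | ⟨x3, h3, rfl⟩
        · have t4 : tprod K ![(E (x0)), (E (2*a + (x1 % c))), (E (2*a + (x2 % c))), (E (p3 + a))] ∈ NN := k0XZg hXZ (x0) (x1 % c) (lt_of_lt_of_le h0 hca) (Nat.mod_lt _ hc) (E (2*a + (x2 % c))) (E (p3 + a))
          have t3 : tprod K ![(E (x0)), (E (x1)), (E (x2 + a)), (E (p3 + a))] ∈ NN := mem_of_diff (mv1XYg hXY (x1) (x2) (lt_of_lt_of_le h1 hca) h2 (E (x0)) (E (p3 + a))) t4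
          have t2 : tprod K ![(E (x0)), (E (x1)), (E (x2)), (E (p3))] ∈ NN := mem_of_diff (mv2XXg hXX (x2) (p3) h2 h3 (E (x0)) (E (x1))) t3
          have t1 : tprod K ![(E (x0)), (E (x1 + a)), (E (x2 + a)), (E (p3))] ∈ NN := mem_of_diff' (mv1XXg hXX (x1) (x2) (lt_of_lt_of_le h1 hca) h2 (E (x0)) (E (p3))) t2
          have hm0 := mv0XYg hXY (x0) (x1) (lt_of_lt_of_le h0 hca) (lt_of_lt_of_le h1 hca) (E (x2 + a)) (E (p3))
          rw [Nat.mod_eq_of_lt h0, Nat.mod_eq_of_lt h1] at hm0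
          have t0 : tprod K ![(E (2*a + (x0))), (E (2*a + (x1))), (E (x2 + a)), (E (p3))] ∈ NN := mem_of_diff' hm0 t1
          exact t0
        · have t3 : tprod K ![(E (x0)), (E (x1)), (E (2*a + (x2 % c))), (E (2*a + (x3 % c)))] ∈ NN := k1XZg hXZ (x1) (x2 % c) (lt_of_lt_of_le h1 hca) (Nat.mod_lt _ hc) (E (x0)) (E (2*a + (x3 % c)))
          have t2 : tprod K ![(E (x0)), (E (x1)), (E (x2)), (E (x3 + a))] ∈ NN := mem_of_diff (mv2XYg hXY (x2) (x3) h2 h3 (E (x0)) (E (x1))) t3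
          have t1 : tprod K ![(E (x0)), (E (x1 + a)), (E (x2 + a)), (E (x3 + a))] ∈ NN := mem_of_diff' (mv1XXg hXX (x1) (x2) (lt_of_lt_of_le h1 hca) h2 (E (x0)) (E (x3 + a))) t2
          have hm0 := mv0XYg hXY (x0) (x1) (lt_of_lt_of_le h0 hca) (lt_of_lt_of_le h1 hca) (E (x2 + a)) (E (x3 + a))
          rw [Nat.mod_eq_of_lt h0, Nat.mod_eq_of_lt h1] at hm0
          have t0 : tprod K ![(E (2*a + (x0))), (E (2*a + (x1))), (E (x2 + a)), (E (x3 + a))] ∈ NN := mem_of_diff' hm0 t1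
          exact t0
        · have t0 : tprod K ![(E (2*a + (x0))), (E (2*a + (x1))), (E (x2 + a)), (E (2*a + (x3)))] ∈ NN := k2YZg hYZ (x2) (x3) h2 h3 (E (2*a + (x0))) (E (2*a + (x1)))
          exact t0
      · rcases classify hn hp3 with ⟨x3, h3, rfl⟩ | ⟨x3, h3, rfl⟩ | ⟨x3, h3, rfl⟩
        · have t1 : tprod K ![(E (x0)), (E (x1 + a)), (E (2*a + (x2))), (E (p3))] ∈ NN := k1YZg hYZ (x1) (x2) (lt_of_lt_of_le h1 hca) h2 (E (x0)) (E (p3))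
          have hm0 := mv0XYg hXY (x0) (x1) (lt_of_lt_of_le h0 hca) (lt_of_lt_of_le h1 hca) (E (2*a + (x2))) (E (p3))
          rw [Nat.mod_eq_of_lt h0, Nat.mod_eq_of_lt h1] at hm0
          have t0 : tprod K ![(E (2*a + (x0))), (E (2*a + (x1))), (E (2*a + (x2))), (E (p3))] ∈ NN := mem_of_diff' hm0 t1
          exact t0
        · have t1 : tprod K ![(E (x0)), (E (x1 + a)), (E (2*a + (x2))), (E (x3 + a))] ∈ NN := k1YZg hYZ (x1) (x2) (lt_of_lt_of_le h1 hca) h2 (E (x0)) (E (x3 + a))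
          have hm0 := mv0XYg hXY (x0) (x1) (lt_of_lt_of_le h0 hca) (lt_of_lt_of_le h1 hca) (E (2*a + (x2))) (E (x3 + a))
          rw [Nat.mod_eq_of_lt h0, Nat.mod_eq_of_lt h1] at hm0
          have t0 : tprod K ![(E (2*a + (x0))), (E (2*a + (x1))), (E (2*a + (x2))), (E (x3 + a))] ∈ NN := mem_of_diff' hm0 t1
          exact t0
        · have t1 : tprod K ![(E (x0)), (E (x1 + a)), (E (2*a + (x2))), (E (2*a + (x3)))] ∈ NN := k1YZg hYZ (x1) (x2) (lt_of_lt_of_le h1 hca) h2 (E (x0)) (E (2*a + (x3)))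
          have hm0 := mv0XYg hXY (x0) (x1) (lt_of_lt_of_le h0 hca) (lt_of_lt_of_le h1 hca) (E (2*a + (x2))) (E (2*a + (x3)))
          rw [Nat.mod_eq_of_lt h0, Nat.mod_eq_of_lt h1] at hm0
          have t0 : tprod K ![(E (2*a + (x0))), (E (2*a + (x1))), (E (2*a + (x2))), (E (2*a + (x3)))] ∈ NN := mem_of_diff' hm0 t1
          exact t0

end Master


section Concrete
variable {K : Type*} [Field K]

open PiTensorProduct (tprod)

/-- basis-ish vectors indexed by naturals -/
noncomputable def ee (n : ℕ) (i : ℕ) : Fin n → K :=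
  if h : i < n then Pi.single (⟨i, h⟩ : Fin n) 1 else 0

/-- index type for the generating family -/
def Idx (a c : ℕ) : Type :=
  ((Fin a × Fin a) ⊕ (Fin a × Fin a)) ⊕ ((Fin a × Fin c) ⊕ (Fin a × Fin c))

instance {a c : ℕ} : Fintype (Idx a c) := inferInstanceAs (Fintype (_ ⊕ _))

noncomputable def gen (K : Type*) [Field K] (n a c : ℕ) :
    Idx a c → (Fin n → K) ⊗[K] (Fin n → K)
  | .inl (.inl (x, y)) => ee n x.1 ⊗ₜ ee n y.1 - ee n (x.1 + a) ⊗ₜ ee n (y.1 + a)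
  | .inl (.inr (x, y)) => ee n x.1 ⊗ₜ ee n (y.1 + a) - ee n (2*a + x.1 % c) ⊗ₜ ee n (2*a + y.1 % c)
  | .inr (.inl (x, z)) => ee n x.1 ⊗ₜ ee n (2*a + z.1)
  | .inr (.inr (y, z)) => ee n (y.1 + a) ⊗ₜ ee n (2*a + z.1)

noncomputable def M0 (K : Type*) [Field K] (n a c : ℕ) :
    Submodule K ((Fin n → K) ⊗[K] (Fin n → K)) :=
  Submodule.span K (Set.range (gen K n a c))

lemma relXX {n a c : ℕ} (x y : Fin a) :
    (ee n x.1 ⊗ₜ ee n y.1 - ee n (x.1 + a) ⊗ₜ ee n (y.1 + a) :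
      (Fin n → K) ⊗[K] (Fin n → K)) ∈ M0 K n a c :=
  Submodule.subset_span ⟨.inl (.inl (x, y)), rfl⟩
lemma relXY {n a c : ℕ} (x y : Fin a) :
    (ee n x.1 ⊗ₜ ee n (y.1 + a) - ee n (2*a + x.1 % c) ⊗ₜ ee n (2*a + y.1 % c) :
      (Fin n → K) ⊗[K] (Fin n → K)) ∈ M0 K n a c :=
  Submodule.subset_span ⟨.inl (.inr (x, y)), rfl⟩
lemma relXZ {n a c : ℕ} (x : Fin a) (z : Fin c) :
    (ee n x.1 ⊗ₜ ee n (2*a + z.1) : (Fin n → K) ⊗[K] (Fin n → K)) ∈ M0 K n a c :=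
  Submodule.subset_span ⟨.inr (.inl (x, z)), rfl⟩
lemma relYZ {n a c : ℕ} (y : Fin a) (z : Fin c) :
    (ee n (y.1 + a) ⊗ₜ ee n (2*a + z.1) : (Fin n → K) ⊗[K] (Fin n → K)) ∈ M0 K n a c :=
  Submodule.subset_span ⟨.inr (.inr (y, z)), rfl⟩

lemma ee_eq (n : ℕ) (i : Fin n) : ee (K := K) n i.1 = Pi.single i 1 := by
  unfold ee
  rw [dif_pos i.isLt]

lemma expand_ee {n : ℕ} (v : Fin n → K) : v = ∑ i : Fin n, v i • ee (K := K) n i.1 := by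
  have := pi_eq_sum_univ v
  convert this using 2 with i _
  rw [ee_eq]
  funext j
  simp [Pi.single_apply, eq_comm]

lemma tprod_eq_matrix {V : Type*} [AddCommGroup V] [Module K V] (g : Fin 4 → V) :
    tprod K g = tprod K ![g 0, g 1, g 2, g 3] := by
  congr 1
  funext k
  fin_cases k <;> simp

lemma tprod_expand {n : ℕ} (g : Fin 4 → (Fin n → K)) :
    tprod K g = ∑ F : Fin 4 → Fin n,
      (∏ k, g k (F k)) • tprod K (fun k => ee (K := K) n (F k).1) := by
  calc tprod K g = tprod K (fun k => ∑ i : Fin n, g k i • ee (K := K) n i.1) := by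
        congr 1; funext k; exact expand_ee (g k)
    _ = _ := by
        rw [MultilinearMap.map_sum (PiTensorProduct.tprod K)
          (fun k i => g k i • (ee (K := K) n i.1 : Fin n → K))]
        congr 1; funext F
        rw [MultilinearMap.map_smul_univ]

set_option maxHeartbeats 4000000 in
lemma M0_top {n a c : ℕ} (hn : 2*a + c = n) (hc : 0 < c) (hca : c ≤ a) :
    GS.idealComp K (Fin n → K) 4 (M0 K n a c) = ⊤ := by
  rw [eq_top_iff, ← PiTensorProduct.span_tprod_eq_top, Submodule.span_le]
  rintro _ ⟨g, rfl⟩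
  rw [tprod_expand g]
  refine Submodule.sum_mem _ (fun F _ => Submodule.smul_mem _ _ ?_)
  rw [tprod_eq_matrix]
  exact master hn hc hca
    (fun x y hx hy => relXX ⟨x, hx⟩ ⟨y, hy⟩)
    (fun x y hx hy => relXY ⟨x, hx⟩ ⟨y, hy⟩)
    (fun x z hx hz => relXZ ⟨x, hx⟩ ⟨z, hz⟩)
    (fun y z hy hz => relYZ ⟨y, hy⟩ ⟨z, hz⟩)
    (F 0).isLt (F 1).isLt (F 2).isLt (F 3).isLt

lemma M0_finrank_le {n a c : ℕ} :
    Module.finrank K (M0 K n a c) ≤ 2*(a*a) + 2*(a*c) := by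
  refine le_trans (finrank_range_le_card (gen K n a c)) ?_
  have : Fintype.card (Idx a c) = 2*(a*a) + 2*(a*c) := by
    rw [Fintype.card_congr' (show Idx a c = (((Fin a × Fin a) ⊕ (Fin a × Fin a)) ⊕ ((Fin a × Fin c) ⊕ (Fin a × Fin c))) from rfl)]
    simp [Idx]
    ring
  simp [this]

lemma finrank_quot_zero {V : Type*} [AddCommGroup V] [Module K V]
    (N : Submodule K V) (h : N = ⊤) : Module.finrank K (V ⧸ N) = 0 := by
  subst h
  have : Subsingleton (V ⧸ (⊤ : Submodule K V)) :=
    Submodule.Quotient.subsingleton_iff.mpr rfl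
  exact Module.finrank_zero_of_subsingleton

lemma exists_superset_finrank_eq {E : Type*} [AddCommGroup E] [Module K E]
    [FiniteDimensional K E] (M₀ : Submodule K E) (d : ℕ)
    (h1 : Module.finrank K M₀ ≤ d) (h2 : d ≤ Module.finrank K E) :
    ∃ M : Submodule K E, M₀ ≤ M ∧ Module.finrank K M = d := by
  induction d with
  | zero => exact ⟨M₀, le_rfl, le_antisymm h1 (Nat.zero_le _)⟩
  | succ d ih =>
      rcases Nat.lt_or_ge (Module.finrank K M₀) (d+1) with hlt | hge
      · obtain ⟨M, hM0, hMd⟩ := ih (by omega) (by omega)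
        have hlt2 : Module.finrank K M < Module.finrank K E := by omega
        obtain ⟨x, hx⟩ := Submodule.exists_of_finrank_lt M hlt2
        have hxM : x ∉ M := fun h => hx 1 one_ne_zero (by simpa using h)
        refine ⟨M ⊔ K ∙ x, le_trans hM0 le_sup_left, ?_⟩
        have hx0 : x ≠ 0 := fun h => hxM (h ▸ M.zero_mem)
        have hdisj : M ⊓ (K ∙ x) = ⊥ := by
          rw [Submodule.eq_bot_iff]
          rintro y ⟨hyM, hyx⟩
          rcases Submodule.mem_span_singleton.mp hyx with ⟨r, rfl⟩
          rcases eq_or_ne r 0 with rfl | hr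
          · simp
          · exact absurd (by simpa [hr] using (Submodule.smul_mem_iff _ hr).mp hyM) hxM
        have := Submodule.finrank_sup_add_finrank_inf_eq M (K ∙ x)
        rw [hdisj] at this
        simp only [finrank_bot, add_zero] at this
        rw [this, hMd, finrank_span_singleton hx0]
      · exact ⟨M₀, le_rfl, le_antisymm hge h1 ▸ rfl⟩

lemma arith (n : ℕ) (hn : 17 ≤ n ∨ n = 9 ∨ n = 12 ∨ n = 14 ∨ n = 15) :
    ∃ a c : ℕ, 2*a + c = n ∧ 0 < c ∧ c ≤ a ∧ 2*(a*a) + 2*(a*c) ≤ n*(n-1)/2 := by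
  have h3 : (∃ m, n = 3*m ∧ 3 ≤ m) ∨ (∃ m, n = 3*m+1 ∧ 5 ≤ m) ∨ (∃ m, n = 3*m+2 ∧ 4 ≤ m) := by
    rcases (show n % 3 = 0 ∨ n % 3 = 1 ∨ n % 3 = 2 by omega) with h | h | h
    · exact Or.inl ⟨n/3, by omega, by omega⟩
    · exact Or.inr (Or.inl ⟨n/3, by omega, by omega⟩)
    · exact Or.inr (Or.inr ⟨n/3, by omega, by omega⟩)
  rcases h3 with ⟨m, rfl, hm⟩ | ⟨m, rfl, hm⟩ | ⟨m, rfl, hm⟩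
  · refine ⟨m, m, by ring, by omega, le_rfl, ?_⟩
    have h1 : 3*m ≤ m*m := Nat.mul_le_mul_right m hm
    have h2 : 3*m*(3*m - 1) + 3*m = 9*(m*m) := by
      have hs : 3*m - 1 + 1 = 3*m := by omega
      calc 3*m*(3*m-1) + 3*m = 3*m*((3*m-1) + 1) := by ring
        _ = 3*m*(3*m) := by rw [hs]
        _ = 9*(m*m) := by ring
    omega
  · refine ⟨m+1, m-1, by omega, by omega, by omega, ?_⟩
    have h1 : 5*m ≤ m*m := Nat.mul_le_mul_right m hm
    have e1 : 2*((m+1)*(m+1)) + 2*((m+1)*(m-1)) = 4*(m*m) + 4*m := by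
      have hs : m - 1 + 1 = m := by omega
      have : (m+1)*(m-1) + (m+1) = (m+1)*m := by
        calc (m+1)*(m-1) + (m+1) = (m+1)*((m-1)+1) := by ring
          _ = (m+1)*m := by rw [hs]
      have h2 : (m+1)*(m-1) = m*m + m - (m+1) := by
        have : (m+1)*m = m*m + m := by ring
        omega
      have h3 : (m+1)*(m+1) = m*m + 2*m + 1 := by ring
      omega
    have e2 : (3*m+1)*((3*m+1) - 1) = 9*(m*m) + 3*m := by
      have hs : 3*m + 1 - 1 = 3*m := by omega
      rw [hs]; ring
    omega
  · refine ⟨m+1, m, by omega, by omega, by omega, ?_⟩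
    have h1 : 4*m ≤ m*m := Nat.mul_le_mul_right m hm
    have e1 : 2*((m+1)*(m+1)) + 2*((m+1)*m) = 4*(m*m) + 6*m + 2 := by ring
    have e2 : (3*m+2)*((3*m+2) - 1) = 9*(m*m) + 9*m + 2 := by
      have hs : 3*m + 2 - 1 = 3*m + 1 := by omega
      rw [hs]; ring
    omega

end Concrete
end GSAux

set_option maxHeartbeats 1000000 in
/-- For any field `K` and any `n` with `n ≥ 17` or
`n ∈ {9, 12, 14, 15}`, there is a quadratic `K`-algebra with `n` generators and
`n(n−1)/2` quadratic relations whose fourth graded component vanishes: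
`h₄(K, n, n(n−1)/2) = 0`. -/
theorem h_four_half_eq_zero (K : Type*) [Field K] (n : ℕ)
    (hn : 17 ≤ n ∨ n ∈ ({9, 12, 14, 15} : Set ℕ)) :
    GS.hq K n (n * (n - 1) / 2) 4 = 0 := by
  have hn' : 17 ≤ n ∨ n = 9 ∨ n = 12 ∨ n = 14 ∨ n = 15 := by
    rcases hn with h | h
    · exact Or.inl h
    · simp only [Set.mem_insert_iff, Set.mem_singleton_iff] at h
      tauto
  obtain ⟨a, c, hnac, hc, hca, hcost⟩ := GSAux.arith n hn'
  set d := n * (n - 1) / 2 with hd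
  have hfr0 : Module.finrank K (GSAux.M0 K n a c) ≤ d :=
    le_trans GSAux.M0_finrank_le hcost
  have hVV : Module.finrank K ((Fin n → K) ⊗[K] (Fin n → K)) = n * n := by
    simp [Module.finrank_tensorProduct]
  have hdVV : d ≤ Module.finrank K ((Fin n → K) ⊗[K] (Fin n → K)) := by
    rw [hVV]
    have h1 : n * (n-1) ≤ n * n := Nat.mul_le_mul_left n (by omega)
    omega
  obtain ⟨M, hM0M, hMd⟩ := GSAux.exists_superset_finrank_eq (GSAux.M0 K n a c) d hfr0 hdVV
  have htop : GS.idealComp K (Fin n → K) 4 M = ⊤ := by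
    have h0 : GS.idealComp K (Fin n → K) 4 (GSAux.M0 K n a c) = ⊤ :=
      GSAux.M0_top hnac hc hca
    exact top_le_iff.mp (h0 ▸ GSAux.idealComp_mono hM0M 4)
  have hquad : GS.quadDim K (Fin n → K) 4 M = 0 := by
    unfold GS.quadDim
    exact GSAux.finrank_quot_zero _ htop
  unfold GS.hq
  exact Nat.sInf_eq_zero.mpr (Or.inl ⟨M, hMd, hquad⟩)
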